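/- Every bidirected graph Γ arises from a skew-symmetric graph G via a partition (V₁, V₂ = σ(V₁)) of V(G), and under the induced map τ every walk in G projects to a walk in Γ (consecutive images form transit pairs), with the symmetric walk σ(P) projecting to the reverse walk of τ(P); conversely, every walk in Γ lifts to a walk in G, uniquely up to swapping parallel symmetric arcs. -/

import Mathlib

/-- A bidirected graph on node type `N`: each edge has two endpoints `endA`,
`endB` and, at each endpoint, a direction (`outA e = true` means the edge
leaves its first endpoint, similarly `outB`).  An edge with `endA e = endB e`
is a loop. -/
structure BDGraph (N : Type) where
  E : Type
  fintypeE : Fintype E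
  endA : E → N
  endB : E → N
  outA : E → Bool
  outB : E → Bool

attribute [instance] BDGraph.fintypeE

namespace BDGraph

variable {N : Type} (Γ : BDGraph N)

open Classical in
/-- Divergence of an edge function `f` at a node `v`: total flow leaving `v`
minus total flow entering `v`; a loop at `v` is counted twice. -/
noncomputable def div (f : Γ.E → ℚ) (v : N) : ℚ :=
  (∑ e, if Γ.endA e = v then (if Γ.outA e then f e else -f e) else 0)
  + (∑ e, if Γ.endB e = v then (if Γ.outB e then f e else -f e) else 0)

/-- A bidirected `q`-flow: nonnegative with zero divergence at every node
other than the source `q`.  Its value is `Γ.div f q`. -/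
def IsBDFlow (q : N) (f : Γ.E → ℚ) : Prop :=
  (∀ e, 0 ≤ f e) ∧ ∀ v, v ≠ q → Γ.div f v = 0

/-- Feasibility of a flow with respect to integer capacities `c`. -/
def FlowFeasible (c : Γ.E → ℕ) (f : Γ.E → ℚ) : Prop :=
  ∀ e, f e ≤ (c e : ℚ)

/-- Integrality of an edge function. -/
def IsIntegral (f : Γ.E → ℚ) : Prop := ∀ e, ∃ z : ℤ, f e = (z : ℚ)

open Classical in
/-- The flip at a node set `X`: the directions of all edge-ends at nodes of
`X` are reversed. -/
noncomputable def flip (X : Set N) : BDGraph N where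
  E := Γ.E
  fintypeE := Γ.fintypeE
  endA := Γ.endA
  endB := Γ.endB
  outA := fun e => if Γ.endA e ∈ X then !Γ.outA e else Γ.outA e
  outB := fun e => if Γ.endB e ∈ X then !Γ.outB e else Γ.outB e

open Classical in
/-- `c[A⃗,B]` : total capacity of the edges leaving `A` whose other endpoint
lies in `B` (for disjoint `A`, `B`). -/
noncomputable def capOutTo (c : Γ.E → ℕ) (A B : Set N) : ℕ :=
  ∑ e, ((if Γ.endA e ∈ A ∧ Γ.endB e ∈ B ∧ Γ.outA e then c e else 0)
    + (if Γ.endB e ∈ A ∧ Γ.endA e ∈ B ∧ Γ.outB e then c e else 0))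

open Classical in
/-- `c[A,B]` : total capacity of the edges with one endpoint in `A` and the
other in `B` (for disjoint `A`, `B`), irrespective of directions. -/
noncomputable def capBetween (c : Γ.E → ℕ) (A B : Set N) : ℕ :=
  ∑ e, if (Γ.endA e ∈ A ∧ Γ.endB e ∈ B) ∨ (Γ.endA e ∈ B ∧ Γ.endB e ∈ A)
    then c e else 0

open Classical in
/-- `c[A⃗,A⃖⃗]` : total capacity of the edges leaving `A` at both endpoints
(including twice-leaving loops). -/
noncomputable def capOutBoth (c : Γ.E → ℕ) (A : Set N) : ℕ :=
  ∑ e, if Γ.endA e ∈ A ∧ Γ.endB e ∈ A ∧ Γ.outA e ∧ Γ.outB e then c e else 0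

/-- `c[A⃗]` : total capacity of the edges leaving `A` into the complement. -/
noncomputable def capOut (c : Γ.E → ℕ) (A : Set N) : ℕ :=
  Γ.capOutTo c A Aᶜ

/-- A step of a bidirected walk: an edge together with the direction of
traversal (`fwd = true`: from `endA` to `endB`). -/
structure Step where
  e : Γ.E
  fwd : Bool

variable {Γ}

/-- The node at which a step starts. -/
def Step.src (s : Γ.Step) : N := if s.fwd then Γ.endA s.e else Γ.endB s.e

/-- The node at which a step ends. -/
def Step.dst (s : Γ.Step) : N := if s.fwd then Γ.endB s.e else Γ.endA s.e

/-- Whether the edge of the step leaves the start node of the step. -/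
def Step.outSrc (s : Γ.Step) : Bool := if s.fwd then Γ.outA s.e else Γ.outB s.e

/-- Whether the edge of the step leaves the end node of the step. -/
def Step.outDst (s : Γ.Step) : Bool := if s.fwd then Γ.outB s.e else Γ.outA s.e

variable (Γ)

/-- A (nontrivial) bidirected walk from `u` to `v`, given by its list of
steps: consecutive steps share a node at which they form a transit pair
(one edge enters the node, the other leaves it). -/
def IsBDWalk (u v : N) (L : List Γ.Step) : Prop :=
  L ≠ [] ∧ (∀ s ∈ L.head?, s.src = u) ∧ (∀ s ∈ L.getLast?, s.dst = v) ∧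
    L.Chain' fun s t => s.dst = t.src ∧ s.outDst ≠ t.outSrc

/-- A closed `q`–`q` walk that leaves `q` twice (at its start and its end). -/
def IsClosedQWalk (q : N) (L : List Γ.Step) : Prop :=
  Γ.IsBDWalk q q L ∧ (∀ s ∈ L.head?, s.outSrc = true) ∧
    ∀ s ∈ L.getLast?, s.outDst = true

open Classical in
/-- The residual bidirected graph of a flow `g` with capacities `c`: it keeps
every unsaturated edge and adds the reverse of every edge carrying flow. -/
noncomputable def residual (c : Γ.E → ℕ) (g : Γ.E → ℚ) : BDGraph N where
  E := {e : Γ.E // g e < (c e : ℚ)} ⊕ {e : Γ.E // 0 < g e}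
  fintypeE := by classical infer_instance
  endA := Sum.elim (fun e => Γ.endA e.1) fun e => Γ.endA e.1
  endB := Sum.elim (fun e => Γ.endB e.1) fun e => Γ.endB e.1
  outA := Sum.elim (fun e => Γ.outA e.1) fun e => !Γ.outA e.1
  outB := Sum.elim (fun e => Γ.outB e.1) fun e => !Γ.outB e.1

/-- The residual capacities on the residual graph. -/
noncomputable def resCap (c : Γ.E → ℕ) (g : Γ.E → ℚ) :
    (Γ.residual c g).E → ℚ :=
  Sum.elim (fun e => (c e.1 : ℚ) - g e.1) fun e => g e.1

end BDGraph

/-- A skew-symmetric graph: a digraph with a fixed-point-free involution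
`sigV` on nodes and an involution `sigA` on arcs mapping an arc from `u` to
`v` to an arc from `sigV v` to `sigV u`. -/
structure SkewGraph (N : Type) where
  A : Type
  fintypeA : Fintype A
  tail : A → N
  head : A → N
  sigV : N → N
  sigA : A → A
  sigV_invol : Function.Involutive sigV
  sigV_ne : ∀ v, sigV v ≠ v
  sigA_invol : Function.Involutive sigA
  tail_sigA : ∀ a, tail (sigA a) = sigV (head a)
  head_sigA : ∀ a, head (sigA a) = sigV (tail a)

attribute [instance] SkewGraph.fintypeA

namespace SkewGraph

variable {N : Type} (G : SkewGraph N)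

open Classical in
/-- Divergence of `f` at `v`: outgoing minus incoming flow. -/
noncomputable def div (f : G.A → ℚ) (v : N) : ℚ :=
  (∑ a, if G.tail a = v then f a else 0)
    - ∑ a, if G.head a = v then f a else 0

/-- An integer skew-symmetric `s`–`s'` flow: a nonnegative, integral,
self-symmetric function with zero divergence away from `s` and `s' = σ(s)`
and nonnegative divergence at `s`; its value is `G.div f s`. -/
def IsISKFlow (s : N) (f : G.A → ℚ) : Prop :=
  (∀ a, 0 ≤ f a) ∧ (∀ a, ∃ z : ℤ, f a = (z : ℚ)) ∧
    (∀ a, f (G.sigA a) = f a) ∧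
    (∀ v, v ≠ s → v ≠ G.sigV s → G.div f v = 0) ∧ 0 ≤ G.div f s

/-- Feasibility with respect to arc capacities. -/
def FlowFeasible (c : G.A → ℕ) (f : G.A → ℚ) : Prop :=
  ∀ a, f a ≤ (c a : ℚ)

open Classical in
/-- `c(X,Y)` : total capacity of the arcs from `X` to `Y`. -/
noncomputable def capFromTo (c : G.A → ℕ) (X Y : Set N) : ℕ :=
  ∑ a, if G.tail a ∈ X ∧ G.head a ∈ Y then c a else 0

/-- `c[X⃗]` : total capacity of the arcs leaving `X`. -/
noncomputable def capOut (c : G.A → ℕ) (X : Set N) : ℕ :=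
  G.capFromTo c X Xᶜ

/-- A directed walk from `u` to `v`, given by its nonempty arc list. -/
def IsDiWalk (u v : N) (L : List G.A) : Prop :=
  L ≠ [] ∧ (∀ a ∈ L.head?, G.tail a = u) ∧ (∀ a ∈ L.getLast?, G.head a = v) ∧
    L.Chain' fun a b => G.head a = G.tail b

open Classical in
/-- The residual skew-symmetric graph of a symmetric flow `f` with symmetric
capacities `c`: unsaturated arcs are kept and reversals of flow-carrying
arcs are added; the skew-symmetry is inherited. -/
noncomputable def residual (c : G.A → ℕ) (f : G.A → ℚ)
    (hc : ∀ a, c (G.sigA a) = c a) (hf : ∀ a, f (G.sigA a) = f a) :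
    SkewGraph N where
  A := {a : G.A // f a < (c a : ℚ)} ⊕ {a : G.A // 0 < f a}
  fintypeA := by classical infer_instance
  tail := Sum.elim (fun a => G.tail a.1) fun a => G.head a.1
  head := Sum.elim (fun a => G.head a.1) fun a => G.tail a.1
  sigV := G.sigV
  sigA := Sum.elim
    (fun a => Sum.inl ⟨G.sigA a.1, by rw [hf, hc]; exact a.2⟩)
    fun a => Sum.inr ⟨G.sigA a.1, by rw [hf]; exact a.2⟩
  sigV_invol := G.sigV_invol
  sigV_ne := G.sigV_ne
  sigA_invol := by
    rintro (a | a) <;> simp [G.sigA_invol a.1]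
  tail_sigA := by
    rintro (a | a) <;> simp [G.tail_sigA, G.head_sigA]
  head_sigA := by
    rintro (a | a) <;> simp [G.tail_sigA, G.head_sigA]

/-- Residual capacities on the residual graph. -/
noncomputable def resCap (c : G.A → ℕ) (f : G.A → ℚ)
    (hc : ∀ a, c (G.sigA a) = c a) (hf : ∀ a, f (G.sigA a) = f a) :
    (G.residual c f hc hf).A → ℚ :=
  Sum.elim (fun a => (c a.1 : ℚ) - f a.1) fun a => f a.1

/-- A `c_f`-regular path in the residual graph: an arc-simple `u`–`v` walk
such that every pair of mutually symmetric arcs occurring on it has residual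
capacity at least `2` (and equal on both mates). -/
def IsRegularPath (c : G.A → ℕ) (f : G.A → ℚ)
    (hc : ∀ a, c (G.sigA a) = c a) (hf : ∀ a, f (G.sigA a) = f a)
    (u v : N) (L : List (G.residual c f hc hf).A) : Prop :=
  (G.residual c f hc hf).IsDiWalk u v L ∧ L.Nodup ∧
    ∀ a ∈ L, (G.residual c f hc hf).sigA a ∈ L →
      G.resCap c f hc hf a = G.resCap c f hc hf ((G.residual c f hc hf).sigA a)
        ∧ 2 ≤ G.resCap c f hc hf a

end SkewGraph

/-- The reverse of a step of a bidirected walk: the same edge traversed in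
the opposite direction. -/
def BDGraph.Step.rev {N : Type} {Γ : BDGraph N} (s : Γ.Step) : Γ.Step :=
  ⟨s.e, !s.fwd⟩

section Aux

variable {N : Type} (Γ : BDGraph N)

/-- Node `v` placed in `V₁` (if `b`) or `V₂`. -/
def nodeOf (v : N) (b : Bool) : N ⊕ N := cond b (Sum.inl v) (Sum.inr v)

@[simp] lemma elim_nodeOf (v : N) (b : Bool) :
    Sum.elim (id : N → N) id (nodeOf v b) = v := by cases b <;> rfl

@[simp] lemma isLeft_nodeOf (v : N) (b : Bool) : (nodeOf v b).isLeft = b := by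
  cases b <;> rfl

@[simp] lemma swap_nodeOf (v : N) (b : Bool) :
    Sum.swap (nodeOf v b) = nodeOf v (!b) := by cases b <;> rfl

lemma nodeOf_inj {v w : N} {b c : Bool} (h : nodeOf v b = nodeOf w c) :
    v = w ∧ b = c := by
  cases b <;> cases c <;> simp [nodeOf] at h <;> simp [h]

/-- The skew-symmetric graph associated to a bidirected graph. -/
def BDGraph.skew : SkewGraph (N ⊕ N) where
  A := Γ.E × Bool
  fintypeA := inferInstance
  tail := fun a => if a.2 then nodeOf (Γ.endB a.1) (Γ.outB a.1)
    else nodeOf (Γ.endA a.1) (Γ.outA a.1)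
  head := fun a => if a.2 then nodeOf (Γ.endA a.1) (!Γ.outA a.1)
    else nodeOf (Γ.endB a.1) (!Γ.outB a.1)
  sigV := Sum.swap
  sigA := fun a => (a.1, !a.2)
  sigV_invol := Sum.swap_swap
  sigV_ne := by rintro (v | v) <;> simp
  sigA_invol := by intro a; simp
  tail_sigA := by rintro ⟨e, (_ | _)⟩ <;> simp
  head_sigA := by rintro ⟨e, (_ | _)⟩ <;> simp

/-- Projection of arcs to steps. -/
def BDGraph.sp : Γ.skew.A → Γ.Step := fun a => ⟨a.1, !a.2⟩

/-- Lift of a step to an arc. -/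
def BDGraph.la : Γ.Step → Γ.skew.A := fun s => (s.e, !s.fwd)

variable {Γ}

@[simp] lemma sp_la (s : Γ.Step) : Γ.sp (Γ.la s) = s := by
  simp [BDGraph.sp, BDGraph.la]

lemma sp_inj : Function.Injective Γ.sp := by
  rintro ⟨e, b⟩ ⟨e', b'⟩ h
  simp only [BDGraph.sp, BDGraph.Step.mk.injEq] at h
  obtain ⟨rfl, h⟩ := h
  obtain rfl := Bool.not_inj h
  rfl

@[simp] lemma src_sp (a : Γ.skew.A) :
    (Γ.sp a).src = Sum.elim id id (Γ.skew.tail a) := by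
  rcases a with ⟨e, (_ | _)⟩ <;> simp [BDGraph.sp, BDGraph.Step.src, BDGraph.skew]

@[simp] lemma dst_sp (a : Γ.skew.A) :
    (Γ.sp a).dst = Sum.elim id id (Γ.skew.head a) := by
  rcases a with ⟨e, (_ | _)⟩ <;> simp [BDGraph.sp, BDGraph.Step.dst, BDGraph.skew]

@[simp] lemma outSrc_sp (a : Γ.skew.A) :
    (Γ.sp a).outSrc = (Γ.skew.tail a).isLeft := by
  rcases a with ⟨e, (_ | _)⟩ <;> simp [BDGraph.sp, BDGraph.Step.outSrc, BDGraph.skew]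

@[simp] lemma outDst_sp (a : Γ.skew.A) :
    (Γ.sp a).outDst = !(Γ.skew.head a).isLeft := by
  rcases a with ⟨e, (_ | _)⟩ <;> simp [BDGraph.sp, BDGraph.Step.outDst, BDGraph.skew]

lemma tail_la (s : Γ.Step) : Γ.skew.tail (Γ.la s) = nodeOf s.src s.outSrc := by
  rcases s with ⟨e, (_ | _)⟩ <;>
    simp [BDGraph.la, BDGraph.skew, BDGraph.Step.src, BDGraph.Step.outSrc]

lemma head_la (s : Γ.Step) : Γ.skew.head (Γ.la s) = nodeOf s.dst (!s.outDst) := by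
  rcases s with ⟨e, (_ | _)⟩ <;>
    simp [BDGraph.la, BDGraph.skew, BDGraph.Step.dst, BDGraph.Step.outDst]

end Aux

/-- every bidirected graph `Γ` arises from a skew-symmetric
graph `G` on the node set `N ⊕ N` (with `σ` swapping the two copies and the
partition `(V₁, V₂) = (inl '' N, inr '' N)`), via a two-to-one, `σ`-invariant
arc projection `τ` compatible with endpoints and directions.  Every walk of
`G` projects to a bidirected walk of `Γ`, the symmetric walk projecting to
the reverse walk; conversely every bidirected walk of `Γ` lifts to a walk of
`G`, uniquely up to swapping parallel symmetric arcs. -/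
theorem bidirected_graph_from_skew_symmetric_graph
    {N : Type} (Γ : BDGraph N) :
    ∃ (G : SkewGraph (N ⊕ N)) (τ : G.A → Γ.E) (stepProj : G.A → Γ.Step),
      -- `σ` swaps the two copies of `N`
      (∀ x : N, G.sigV (Sum.inl x) = Sum.inr x) ∧
      (∀ x : N, G.sigV (Sum.inr x) = Sum.inl x) ∧
      -- `τ` is `σ`-invariant and two-to-one
      (∀ a, τ (G.sigA a) = τ a) ∧
      (∀ e : Γ.E, ∃ a, τ a = e ∧ ∀ b, τ b = e → b = a ∨ b = G.sigA a) ∧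
      (∀ a, G.sigA a ≠ a) ∧
      -- endpoint/direction compatibility: an arc end at the tail lies in `V₁`
      -- iff the corresponding edge end leaves it; an arc end at the head lies
      -- in `V₁` iff the corresponding edge end enters it
      (∀ a, (Sum.elim id id (G.tail a) = Γ.endA (τ a) ∧
              Sum.elim id id (G.head a) = Γ.endB (τ a) ∧
              (G.tail a).isLeft = Γ.outA (τ a) ∧
              (G.head a).isLeft = !Γ.outB (τ a)) ∨
            (Sum.elim id id (G.tail a) = Γ.endB (τ a) ∧
              Sum.elim id id (G.head a) = Γ.endA (τ a) ∧
              (G.tail a).isLeft = Γ.outB (τ a) ∧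
              (G.head a).isLeft = !Γ.outA (τ a))) ∧
      -- `stepProj` realizes `τ`, and symmetric arcs project to reverse steps
      (∀ a, (stepProj a).e = τ a) ∧
      (∀ a, stepProj (G.sigA a) = (stepProj a).rev) ∧
      -- projection of walks: a walk of `G` projects to a bidirected walk
      (∀ (u v : N ⊕ N) (L : List G.A), G.IsDiWalk u v L →
        Γ.IsBDWalk (Sum.elim id id u) (Sum.elim id id v) (L.map stepProj)) ∧
      -- lifting of walks, with uniqueness up to swapping parallel symmetric arcs
      (∀ (u v : N) (S : List Γ.Step), Γ.IsBDWalk u v S →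
        ∃ (x y : N ⊕ N) (L : List G.A), Sum.elim id id x = u ∧
          Sum.elim id id y = v ∧ G.IsDiWalk x y L ∧ L.map stepProj = S) ∧
      (∀ (x y x' y' : N ⊕ N) (L L' : List G.A) (S : List Γ.Step),
        G.IsDiWalk x y L → G.IsDiWalk x' y' L' →
        L.map stepProj = S → L'.map stepProj = S →
        List.Forall₂ (fun a b => a = b ∨
          (b = G.sigA a ∧ G.tail a = G.tail b ∧ G.head a = G.head b)) L L') := by
  classical
  refine ⟨Γ.skew, Prod.fst, Γ.sp, fun x => rfl, fun x => rfl, fun a => rfl,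
    ?_, ?_, ?_, fun a => rfl, ?_, ?_, ?_, ?_⟩
  · -- two-to-one
    intro e
    refine ⟨(e, false), rfl, ?_⟩
    rintro ⟨e', (_ | _)⟩ rfl
    · exact Or.inl rfl
    · exact Or.inr rfl
  · -- sigA a ≠ a
    rintro ⟨e, b⟩ h
    have := congrArg Prod.snd h
    simp [BDGraph.skew] at this
  · -- endpoint/direction compatibility
    rintro ⟨e, (_ | _)⟩
    · exact Or.inl ⟨by simp [BDGraph.skew], by simp [BDGraph.skew],
        by simp [BDGraph.skew], by simp [BDGraph.skew]⟩
    · exact Or.inr ⟨by simp [BDGraph.skew], by simp [BDGraph.skew],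
        by simp [BDGraph.skew], by simp [BDGraph.skew]⟩
  · -- symmetric arcs project to reverse steps
    rintro ⟨e, b⟩
    simp [BDGraph.sp, BDGraph.skew, BDGraph.Step.rev]
  · -- projection of walks
    rintro u v L ⟨hne, hh, hl, hc⟩
    refine ⟨by simpa using hne, ?_, ?_, ?_⟩
    · intro s hs
      rw [List.head?_map] at hs
      rcases Option.map_eq_some_iff.mp hs with ⟨a, ha, rfl⟩
      rw [src_sp, hh a ha]
    · intro s hs
      rw [List.getLast?_map] at hs
      rcases Option.map_eq_some_iff.mp hs with ⟨a, ha, rfl⟩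
      rw [dst_sp, hl a ha]
    · simp only [List.Chain'] at hc ⊢
      rw [List.isChain_map]
      refine hc.imp ?_
      intro a b hab
      refine ⟨by rw [dst_sp, src_sp, hab], ?_⟩
      rw [outDst_sp, outSrc_sp, hab]
      cases Γ.skew.tail b <;> simp
  · -- lifting of walks
    rintro u v S ⟨hne, hh, hl, hc⟩
    have hh' : S.head hne ∈ S.head? := by rw [List.head?_eq_head hne]; rfl
    have hl' : S.getLast hne ∈ S.getLast? := by
      rw [List.getLast?_eq_getLast hne]; rfl
    refine ⟨Γ.skew.tail (Γ.la (S.head hne)), Γ.skew.head (Γ.la (S.getLast hne)),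
      S.map Γ.la, ?_, ?_, ⟨by simpa using hne, ?_, ?_, ?_⟩, ?_⟩
    · rw [tail_la, elim_nodeOf, hh _ hh']
    · rw [head_la, elim_nodeOf, hl _ hl']
    · intro a ha
      rw [List.head?_map] at ha
      rcases Option.map_eq_some_iff.mp ha with ⟨s, hs, rfl⟩
      rw [List.head?_eq_head hne] at hs
      rw [Option.some_inj.mp hs]
    · intro a ha
      rw [List.getLast?_map] at ha
      rcases Option.map_eq_some_iff.mp ha with ⟨s, hs, rfl⟩
      rw [List.getLast?_eq_getLast hne] at hs
      rw [Option.some_inj.mp hs]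
    · simp only [List.Chain'] at hc ⊢
      rw [List.isChain_map]
      refine hc.imp ?_
      rintro s t ⟨h1, h2⟩
      rw [head_la, tail_la, h1]
      congr 1
      cases hs : s.outDst <;> cases ht : t.outSrc <;> simp_all
    · rw [List.map_map]
      have : Γ.sp ∘ Γ.la = id := funext fun s => sp_la s
      rw [this, List.map_id]
  · -- uniqueness
    intro x y x' y' L L' S _ _ h1 h2
    have : L = L' := List.map_injective_iff.mpr sp_inj (h1.trans h2.symm)
    subst this
    exact List.forall₂_same.mpr fun a _ => Or.inl rfl
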